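/- Let W(1), W(2), ... be row-stochastic n×n matrices and suppose there exist h ∈ ℕ and p ∈ (0,1] and α ∈ (0,1] such that for every k the product W(k+h)···W(k+1) is scrambling with probability at least p (conditioned on the past), and every positive entry of each W(k) is at least α. Let x_{k+1} = W(k+1)x_k and v_k = max_i x_k^i - min_i x_k^i. Then E[v_{k+h} | F_k] ≤ (1 - p·α^h) v_k for all k. -/

import Mathlib

open MeasureTheory Filter

def IsStochastic {n : ℕ} (A : Matrix (Fin n) (Fin n) ℝ) : Prop :=
  (∀ i j, 0 ≤ A i j) ∧ ∀ i, ∑ j, A i j = 1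

noncomputable def tau {n : ℕ} (A : Matrix (Fin n) (Fin n) ℝ) : ℝ :=
  1 - ⨅ p : Fin n × Fin n, ∑ s, min (A p.1 s) (A p.2 s)

def Scrambling {n : ℕ} (A : Matrix (Fin n) (Fin n) ℝ) : Prop :=
  ∀ i j, ∃ s, 0 < A i s ∧ 0 < A j s

noncomputable def spread {n : ℕ} (x : Fin n → ℝ) : ℝ := (⨆ i, x i) - ⨅ i, x i

/-- Backward product `W(k+h) ⋯ W(k+1)` of a matrix sequence. -/
def backProd {n : ℕ} (W : ℕ → Matrix (Fin n) (Fin n) ℝ) (k : ℕ) : ℕ → Matrix (Fin n) (Fin n) ℝ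
  | 0 => 1
  | h + 1 => W (k + h + 1) * backProd W k h

section Aux

variable {n : ℕ}

lemma aux_spread_nonneg (hn : 0 < n) (x : Fin n → ℝ) : 0 ≤ spread x := by
  haveI : Nonempty (Fin n) := ⟨⟨0, hn⟩⟩
  have h1 : (⨅ i, x i) ≤ x (Classical.arbitrary _) :=
    ciInf_le (Set.Finite.bddBelow (Set.finite_range x)) _
  have h2 : x (Classical.arbitrary _) ≤ ⨆ i, x i :=
    le_ciSup (Set.Finite.bddAbove (Set.finite_range x)) _
  simp only [spread]; linarith

lemma aux_stoch_mul {A B : Matrix (Fin n) (Fin n) ℝ} (hA : IsStochastic A)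
    (hB : IsStochastic B) : IsStochastic (A * B) := by
  constructor
  · intro i j
    rw [Matrix.mul_apply]
    exact Finset.sum_nonneg fun s _ => mul_nonneg (hA.1 i s) (hB.1 s j)
  · intro i
    simp only [Matrix.mul_apply]
    rw [Finset.sum_comm]
    calc ∑ s, ∑ j, A i s * B s j = ∑ s, A i s * ∑ j, B s j := by
          simp [Finset.mul_sum]
      _ = ∑ s, A i s := by simp [hB.2]
      _ = 1 := hA.2 i

lemma aux_backProd_stoch {W : ℕ → Matrix (Fin n) (Fin n) ℝ}
    (hW : ∀ k, IsStochastic (W k)) (k : ℕ) : ∀ h, IsStochastic (backProd W k h)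
  | 0 => by
    constructor
    · intro i j; by_cases hij : i = j <;> simp [backProd, Matrix.one_apply, hij]
    · intro i; simp [backProd, Matrix.one_apply]
  | h + 1 => aux_stoch_mul (hW _) (aux_backProd_stoch hW k h)

lemma aux_mul_lb {A B : Matrix (Fin n) (Fin n) ℝ} {a b : ℝ} (hb : 0 ≤ b)
    (hA0 : ∀ i j, 0 ≤ A i j) (hB0 : ∀ i j, 0 ≤ B i j)
    (hA : ∀ i j, 0 < A i j → a ≤ A i j) (hB : ∀ i j, 0 < B i j → b ≤ B i j) :
    ∀ i j, 0 < (A * B) i j → a * b ≤ (A * B) i j := by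
  intro i j hij
  rw [Matrix.mul_apply] at hij ⊢
  have hnn : ∀ s ∈ Finset.univ, (0:ℝ) ≤ A i s * B s j :=
    fun s _ => mul_nonneg (hA0 i s) (hB0 s j)
  have : ∃ s, A i s * B s j ≠ 0 := by
    by_contra hc
    push_neg at hc
    simp [Finset.sum_congr rfl fun s _ => hc s] at hij
  obtain ⟨s, hs⟩ := this
  have hspos : 0 < A i s * B s j := lt_of_le_of_ne (hnn s (Finset.mem_univ s)) (Ne.symm hs)
  have hApos : 0 < A i s := by
    rcases (hA0 i s).lt_or_eq with h | h
    · exact h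
    · exfalso; rw [← h] at hspos; simp at hspos
  have hBpos : 0 < B s j := by
    rcases (hB0 s j).lt_or_eq with h | h
    · exact h
    · exfalso; rw [← h] at hspos; simp at hspos
  calc a * b ≤ A i s * B s j := mul_le_mul (hA i s hApos) (hB s j hBpos) hb (hA0 i s)
    _ ≤ ∑ t, A i t * B t j := Finset.single_le_sum hnn (Finset.mem_univ s)

lemma aux_backProd_lb {W : ℕ → Matrix (Fin n) (Fin n) ℝ} {α : ℝ} (hα : 0 ≤ α)
    (hW : ∀ k, IsStochastic (W k)) (hlb : ∀ m i j, 0 < W m i j → α ≤ W m i j) (k : ℕ) :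
    ∀ h i j, 0 < backProd W k h i j → α ^ h ≤ backProd W k h i j
  | 0 => by
    intro i j hij
    by_cases hd : i = j
    · simp [backProd, Matrix.one_apply, hd]
    · simp [backProd, Matrix.one_apply, hd] at hij
  | h + 1 => by
    have := aux_mul_lb (a := α) (b := α ^ h) (pow_nonneg hα h)
      (hW (k + h + 1)).1 (aux_backProd_stoch hW k h).1 (hlb (k + h + 1))
      (aux_backProd_lb hα hW hlb k h)
    intro i j hij
    have h2 := this i j hij
    calc α ^ (h + 1) = α * α ^ h := by ring
      _ ≤ _ := h2

lemma aux_tau_le_one (hn : 0 < n) {A : Matrix (Fin n) (Fin n) ℝ} (hA : IsStochastic A) :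
    tau A ≤ 1 := by
  haveI : Nonempty (Fin n) := ⟨⟨0, hn⟩⟩
  have : (0:ℝ) ≤ ⨅ p : Fin n × Fin n, ∑ s, min (A p.1 s) (A p.2 s) :=
    le_ciInf fun p => Finset.sum_nonneg fun s _ => le_min (hA.1 p.1 s) (hA.1 p.2 s)
  simp only [tau]; linarith

lemma aux_tau_le_scr (hn : 0 < n) {A : Matrix (Fin n) (Fin n) ℝ} {β : ℝ}
    (hA : IsStochastic A) (hscr : Scrambling A) (hβ : ∀ i j, 0 < A i j → β ≤ A i j) :
    tau A ≤ 1 - β := by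
  haveI : Nonempty (Fin n) := ⟨⟨0, hn⟩⟩
  have : β ≤ ⨅ p : Fin n × Fin n, ∑ s, min (A p.1 s) (A p.2 s) := by
    refine le_ciInf fun pr => ?_
    obtain ⟨s, hs1, hs2⟩ := hscr pr.1 pr.2
    calc β ≤ min (A pr.1 s) (A pr.2 s) := le_min (hβ _ _ hs1) (hβ _ _ hs2)
      _ ≤ ∑ t, min (A pr.1 t) (A pr.2 t) :=
        Finset.single_le_sum (fun t _ => le_min (hA.1 pr.1 t) (hA.1 pr.2 t))
          (Finset.mem_univ s)
  simp only [tau]; linarith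

lemma aux_spread_mulVec (hn : 0 < n) {A : Matrix (Fin n) (Fin n) ℝ} (hA : IsStochastic A)
    (x : Fin n → ℝ) : spread (A.mulVec x) ≤ tau A * spread x := by
  haveI : Nonempty (Fin n) := ⟨⟨0, hn⟩⟩
  set M := ⨆ i, x i with hM
  set m := ⨅ i, x i with hm
  have hxM : ∀ s, x s ≤ M := fun s => le_ciSup (Set.Finite.bddAbove (Set.finite_range x)) s
  have hmx : ∀ s, m ≤ x s := fun s => ciInf_le (Set.Finite.bddBelow (Set.finite_range x)) s
  have hMm : m ≤ M := (hmx (Classical.arbitrary _)).trans (hxM (Classical.arbitrary _))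
  have key : ∀ i j, A.mulVec x i - A.mulVec x j ≤ tau A * (M - m) := by
    intro i j
    set c := ∑ s, min (A i s) (A j s) with hc
    have htau : 1 - c ≤ tau A := by
      have : (⨅ p : Fin n × Fin n, ∑ s, min (A p.1 s) (A p.2 s)) ≤ c :=
        ciInf_le (Set.Finite.bddBelow (Set.finite_range _)) (i, j)
      simp only [tau]; linarith
    have hub : ∑ s, (A i s - min (A i s) (A j s)) * x s ≤ (1 - c) * M := by
      calc ∑ s, (A i s - min (A i s) (A j s)) * x s
          ≤ ∑ s, (A i s - min (A i s) (A j s)) * M :=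
            Finset.sum_le_sum fun s _ =>
              mul_le_mul_of_nonneg_left (hxM s) (by simp [min_le_iff])
        _ = (1 - c) * M := by
            rw [← Finset.sum_mul, Finset.sum_sub_distrib, hA.2 i, ← hc]
    have hlb : (1 - c) * m ≤ ∑ s, (A j s - min (A i s) (A j s)) * x s := by
      calc (1 - c) * m = ∑ s, (A j s - min (A i s) (A j s)) * m := by
            rw [← Finset.sum_mul, Finset.sum_sub_distrib, hA.2 j, ← hc]
        _ ≤ ∑ s, (A j s - min (A i s) (A j s)) * x s :=
            Finset.sum_le_sum fun s _ =>
              mul_le_mul_of_nonneg_left (hmx s) (by simp [min_le_iff])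
    have hdiff : A.mulVec x i - A.mulVec x j
        = ∑ s, (A i s - min (A i s) (A j s)) * x s
          - ∑ s, (A j s - min (A i s) (A j s)) * x s := by
      simp only [Matrix.mulVec, dotProduct, sub_mul, Finset.sum_sub_distrib]
      ring
    calc A.mulVec x i - A.mulVec x j ≤ (1 - c) * M - (1 - c) * m := by
          rw [hdiff]; exact sub_le_sub hub hlb
      _ = (1 - c) * (M - m) := by ring
      _ ≤ tau A * (M - m) := mul_le_mul_of_nonneg_right htau (by linarith)
  obtain ⟨j, hj⟩ := Finite.exists_min (A.mulVec x)
  have hinf : (⨅ i, A.mulVec x i) = A.mulVec x j :=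
    le_antisymm (ciInf_le (Set.Finite.bddBelow (Set.finite_range _)) j) (le_ciInf hj)
  have hsup : (⨆ i, A.mulVec x i) ≤ tau A * (M - m) + A.mulVec x j := by
    refine ciSup_le fun i => ?_
    have := key i j
    linarith
  simp only [spread, hinf, ← hM, ← hm]
  linarith [hsup]

lemma aux_iter {W : ℕ → Matrix (Fin n) (Fin n) ℝ} {y : ℕ → Fin n → ℝ}
    (hrec : ∀ k, y (k + 1) = (W (k + 1)).mulVec (y k)) (k : ℕ) :
    ∀ h, y (k + h) = (backProd W k h).mulVec (y k)
  | 0 => by simp [backProd, Matrix.one_mulVec]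
  | h + 1 => by
    rw [show k + (h + 1) = (k + h) + 1 from rfl, hrec, aux_iter hrec k h,
      show backProd W k (h+1) = W (k + h + 1) * backProd W k h from rfl,
      Matrix.mulVec_mulVec]

end Aux

theorem finite_step_contraction_in_expectation {n : ℕ} (hn : 0 < n)
    {Ω : Type*} {m0 : MeasurableSpace Ω} {μ : Measure Ω} [IsProbabilityMeasure μ]
    (ℱ : Filtration ℕ m0) (W : ℕ → Ω → Matrix (Fin n) (Fin n) ℝ)
    (h : ℕ) (hh : 1 ≤ h) (p : ℝ) (hp0 : 0 < p) (hp1 : p ≤ 1)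
    (α : ℝ) (hα0 : 0 < α) (hα1 : α ≤ 1)
    (hstoch : ∀ k ω, IsStochastic (W k ω))
    (hbdd : ∀ k ω i j, 0 < W k ω i j → α ≤ W k ω i j)
    (x : ℕ → Ω → Fin n → ℝ) (x0 : Fin n → ℝ) (hx0 : ∀ ω, x 0 ω = x0)
    (hrec : ∀ k ω, x (k + 1) ω = (W (k + 1) ω).mulVec (x k ω))
    (hadp : ∀ k, StronglyMeasurable[ℱ k] fun ω => spread (x k ω))
    (hint : ∀ k, Integrable (fun ω => spread (x k ω)) μ)
    (hscr : ∀ k, (fun _ : Ω => p) ≤ᵐ[μ]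
      μ[Set.indicator {ω | Scrambling (backProd (fun i => W i ω) k h)}
          (fun _ => (1 : ℝ))|ℱ k]) :
    ∀ k, μ[fun ω => spread (x (k + h) ω)|ℱ k] ≤ᵐ[μ]
      fun ω => (1 - p * α ^ h) * spread (x k ω) := by
  intro k
  classical
  set S : Set Ω := {ω | Scrambling (backProd (fun i => W i ω) k h)} with hSdef
  set f : Ω → ℝ := Set.indicator S (fun _ => (1:ℝ)) with hfdef
  set Y : Ω → ℝ := fun ω => spread (x k ω) with hYdef
  have hscr' := hscr k
  by_cases hfint : Integrable f μ
  swap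
  · exfalso
    rw [condExp_of_not_integrable hfint] at hscr'
    obtain ⟨ω, hω⟩ := hscr'.exists
    simp only [Pi.zero_apply] at hω
    linarith
  have hβ : (0:ℝ) < α ^ h := pow_pos hα0 h
  have hYnn : ∀ ω, 0 ≤ Y ω := fun ω => aux_spread_nonneg hn _
  -- pointwise key inequality
  have hkey : ∀ ω, spread (x (k + h) ω) ≤ Y ω - α ^ h * (f ω * Y ω) := by
    intro ω
    set B := backProd (fun i => W i ω) k h with hB
    have hBst : IsStochastic B := aux_backProd_stoch (fun m => hstoch m ω) k h
    have hxp : x (k + h) ω = B.mulVec (x k ω) :=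
      aux_iter (W := fun i => W i ω) (y := fun m => x m ω) (fun m => hrec m ω) k h
    have hmain := aux_spread_mulVec hn hBst (x k ω)
    rw [hxp]
    by_cases hω : ω ∈ S
    · have hf1 : f ω = 1 := Set.indicator_of_mem hω _
      have hBlb : ∀ i j, 0 < B i j → α ^ h ≤ B i j :=
        aux_backProd_lb hα0.le (fun m => hstoch m ω) (fun m => hbdd m ω) k h
      have h2 : tau B ≤ 1 - α ^ h := aux_tau_le_scr hn hBst hω hBlb
      calc spread (B.mulVec (x k ω)) ≤ tau B * Y ω := hmain
        _ ≤ (1 - α ^ h) * Y ω := mul_le_mul_of_nonneg_right h2 (hYnn ω)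
        _ = Y ω - α ^ h * (f ω * Y ω) := by rw [hf1]; ring
    · have hf0 : f ω = 0 := Set.indicator_of_notMem hω _
      calc spread (B.mulVec (x k ω)) ≤ tau B * Y ω := hmain
        _ ≤ 1 * Y ω := mul_le_mul_of_nonneg_right (aux_tau_le_one hn hBst) (hYnn ω)
        _ = Y ω - α ^ h * (f ω * Y ω) := by rw [hf0]; ring
  have hfbd : ∀ ω, ‖f ω‖ ≤ 1 := by
    intro ω
    by_cases hω : ω ∈ S <;> simp [hfdef, Set.indicator_of_mem, Set.indicator_of_notMem, hω]
  have hfY : Integrable (fun ω => f ω * Y ω) μ :=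
    Integrable.bdd_mul (hint k) hfint.1 (Eventually.of_forall hfbd)
  have hgint : Integrable (fun ω => Y ω - α ^ h * (f ω * Y ω)) μ :=
    (hint k).sub (hfY.const_mul _)
  have step1 : μ[fun ω => spread (x (k + h) ω)|ℱ k]
      ≤ᵐ[μ] μ[fun ω => Y ω - α ^ h * (f ω * Y ω)|ℱ k] :=
    condExp_mono (hint (k + h)) hgint (Eventually.of_forall hkey)
  have step2 : μ[fun ω => Y ω - α ^ h * (f ω * Y ω)|ℱ k]
      =ᵐ[μ] μ[Y|ℱ k] - μ[fun ω => α ^ h * (f ω * Y ω)|ℱ k] :=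
    condExp_sub (hint k) (hfY.const_mul _) _
  have step3 : μ[fun ω => α ^ h * (f ω * Y ω)|ℱ k]
      =ᵐ[μ] (α ^ h) • μ[fun ω => f ω * Y ω|ℱ k] := by
    have := condExp_smul (μ := μ) (m := ℱ k) (α ^ h) (fun ω => f ω * Y ω)
    rwa [show (α ^ h • fun ω => f ω * Y ω) = fun ω => α ^ h * (f ω * Y ω) from by
      funext ω; simp [Pi.smul_apply, smul_eq_mul]] at this
  have hYf : (fun ω => f ω * Y ω) = (Y * f) := by
    funext ω; simp [mul_comm]
  have step4 : μ[Y * f|ℱ k] =ᵐ[μ] Y * μ[f|ℱ k] := by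
    refine condExp_mul_of_stronglyMeasurable_left (hadp k) ?_ hfint
    rw [← hYf]; exact hfY
  have hYeq : μ[Y|ℱ k] = Y :=
    condExp_of_stronglyMeasurable (ℱ.le k) (hadp k) (hint k)
  rw [hYf] at step3
  filter_upwards [step1, step2, step3, step4, hscr'] with ω h1 h2 h3 h4 h5
  have hE : p ≤ (μ[f|ℱ k]) ω := h5
  have h2' := h2
  rw [hYeq] at h2'
  have := h1.trans_eq h2'
  simp only [Pi.sub_apply] at this
  rw [h3] at this
  simp only [Pi.smul_apply, smul_eq_mul] at this
  rw [h4] at this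
  simp only [Pi.mul_apply] at this
  have hmul : Y ω * p ≤ Y ω * (μ[f|ℱ k]) ω :=
    mul_le_mul_of_nonneg_left hE (hYnn ω)
  have : (μ[fun ω => spread (x (k + h) ω)|ℱ k]) ω
      ≤ Y ω - α ^ h * (Y ω * (μ[f|ℱ k]) ω) := this
  nlinarith [this, hmul, hβ, hYnn ω]
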